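/- Let w⁰ ∈ ℝ^n with w⁰_j > 0 and ∑_j w⁰_j = 1, and let r ∈ ℝ^n be such that min_j r_j < 0 < max_j r_j. Then there exists a unique ε̂ ∈ ℝ such that ∑_j w_j(ε̂) r_j = 0, where w_j(ε) = w⁰_j exp(ε r_j)/∑_k w⁰_k exp(ε r_k). -/

import Mathlib

open Real

lemma tsc_exists_pos {n : ℕ} (w0 r : Fin n → ℝ) (hw0 : ∀ j, 0 < w0 j)
    (jp : Fin n) (hjp : 0 < r jp) :
    ∃ ε : ℝ, 0 < ∑ j, w0 j * Real.exp (ε * r j) * r j := by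
  set C := ∑ j, w0 j * |r j| with hC
  have hC0 : 0 ≤ C := Finset.sum_nonneg fun j _ => mul_nonneg (hw0 j).le (abs_nonneg _)
  set X := (C + 1) / (w0 jp * r jp) with hX
  have hwjp := hw0 jp
  have hX0 : 0 < X := by positivity
  refine ⟨max (Real.log X / r jp) 0, ?_⟩
  set b := max (Real.log X / r jp) 0 with hb
  have hb0 : 0 ≤ b := le_max_right _ _
  have hbr : Real.log X ≤ b * r jp := by
    have h1 : Real.log X / r jp ≤ b := le_max_left _ _
    have h2 : (Real.log X / r jp) * r jp = Real.log X := div_mul_cancel₀ _ hjp.ne'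
    nlinarith [mul_le_mul_of_nonneg_right h1 hjp.le]
  have hexp : X ≤ Real.exp (b * r jp) := by
    rw [← Real.exp_log hX0]; exact Real.exp_le_exp.2 hbr
  have hterm : C + 1 ≤ w0 jp * Real.exp (b * r jp) * r jp := by
    have h2 : X * (w0 jp * r jp) = C + 1 :=
      div_mul_cancel₀ _ (mul_pos hwjp hjp).ne'
    nlinarith
  have hrest : ∀ j ∈ Finset.univ.erase jp,
      -(w0 j * |r j|) ≤ w0 j * Real.exp (b * r j) * r j := by
    intro j _
    rcases le_or_gt 0 (r j) with h | h
    · have h1 : 0 ≤ w0 j * Real.exp (b * r j) * r j :=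
        mul_nonneg (mul_nonneg (hw0 j).le (Real.exp_pos _).le) h
      have h2 : 0 ≤ w0 j * |r j| := mul_nonneg (hw0 j).le (abs_nonneg _)
      linarith
    · have h1 : Real.exp (b * r j) ≤ 1 := Real.exp_le_one_iff.2 (by nlinarith)
      have h2 : |r j| = -r j := abs_of_neg h
      rw [h2]
      nlinarith [mul_nonneg (mul_nonneg (sub_nonneg.2 h1) (hw0 j).le)
        (neg_nonneg.2 h.le)]
  have hsub : ∑ j ∈ Finset.univ.erase jp, w0 j * |r j| ≤ C := by
    rw [hC]
    exact Finset.sum_le_sum_of_subset_of_nonneg (Finset.erase_subset _ _)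
      (fun j _ _ => mul_nonneg (hw0 j).le (abs_nonneg _))
  have hsum_rest : -C ≤ ∑ j ∈ Finset.univ.erase jp, w0 j * Real.exp (b * r j) * r j := by
    have h1 := Finset.sum_le_sum hrest
    have h2 : ∑ j ∈ Finset.univ.erase jp, -(w0 j * |r j|)
        = -∑ j ∈ Finset.univ.erase jp, w0 j * |r j| := Finset.sum_neg_distrib _
    linarith
  have hsplit : ∑ j, w0 j * Real.exp (b * r j) * r j
      = w0 jp * Real.exp (b * r jp) * r jp
        + ∑ j ∈ Finset.univ.erase jp, w0 j * Real.exp (b * r j) * r j :=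
    (Finset.add_sum_erase _ _ (Finset.mem_univ jp)).symm
  linarith

/-- Existence and uniqueness of the TSC tilting parameter: if the residuals take
both strictly negative and strictly positive values, the targeting equation
`∑ w_j(ε) r_j = 0` has a unique root. -/
theorem targeting_equation_unique_root {n : ℕ} (w0 r : Fin n → ℝ)
    (hw0 : ∀ j, 0 < w0 j) (hsum : ∑ j, w0 j = 1)
    (hneg : ∃ j, r j < 0) (hpos : ∃ j, 0 < r j) :
    ∃! ε : ℝ,
      ∑ j, (w0 j * Real.exp (ε * r j) / ∑ k, w0 k * Real.exp (ε * r k)) * r j = 0 := by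
  obtain ⟨jn, hjn⟩ := hneg
  obtain ⟨jp, hjp⟩ := hpos
  set g : ℝ → ℝ := fun ε => ∑ j, w0 j * Real.exp (ε * r j) * r j with hg
  have hZ : ∀ ε : ℝ, 0 < ∑ k, w0 k * Real.exp (ε * r k) := by
    intro ε
    exact Finset.sum_pos (fun k _ => mul_pos (hw0 k) (Real.exp_pos _))
      ⟨jp, Finset.mem_univ jp⟩
  have hiff : ∀ ε : ℝ,
      (∑ j, (w0 j * Real.exp (ε * r j) / ∑ k, w0 k * Real.exp (ε * r k)) * r j = 0)
        ↔ g ε = 0 := by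
    intro ε
    have hZ' := (hZ ε).ne'
    have hrw : ∑ j, (w0 j * Real.exp (ε * r j) / ∑ k, w0 k * Real.exp (ε * r k)) * r j
        = g ε / ∑ k, w0 k * Real.exp (ε * r k) := by
      rw [hg]
      simp only
      rw [Finset.sum_div]
      exact Finset.sum_congr rfl fun j _ => div_mul_eq_mul_div _ _ _
    rw [hrw, div_eq_zero_iff]
    exact ⟨fun h => h.resolve_right hZ', fun h => Or.inl h⟩
  have hmono : StrictMono g := by
    intro a c hac
    apply Finset.sum_lt_sum
    · intro j _
      rcases lt_trichotomy (r j) 0 with h | h | h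
      · have h1 : Real.exp (c * r j) ≤ Real.exp (a * r j) :=
          Real.exp_le_exp.2 (by nlinarith)
        nlinarith [mul_nonneg (mul_nonneg (sub_nonneg.2 h1) (hw0 j).le)
          (neg_nonneg.2 h.le)]
      · simp [h]
      · have h1 : Real.exp (a * r j) ≤ Real.exp (c * r j) :=
          Real.exp_le_exp.2 (by nlinarith)
        nlinarith [mul_nonneg (mul_nonneg (sub_nonneg.2 h1) (hw0 j).le) h.le]
    · refine ⟨jp, Finset.mem_univ jp, ?_⟩
      have h1 : Real.exp (a * r jp) < Real.exp (c * r jp) :=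
        Real.exp_lt_exp.2 (by nlinarith)
      nlinarith [mul_pos (mul_pos (sub_pos.2 h1) (hw0 jp)) hjp]
  have hcont : Continuous g := by
    apply continuous_finset_sum
    intro j _
    fun_prop
  obtain ⟨b, hbpos⟩ := tsc_exists_pos w0 r hw0 jp hjp
  obtain ⟨a', ha'⟩ := tsc_exists_pos w0 (fun j => -(r j)) hw0 jn (by simpa using hjn)
  have haneg : g (-a') < 0 := by
    have heq : ∑ j, w0 j * Real.exp (a' * -(r j)) * -(r j)
        = -∑ j, w0 j * Real.exp ((-a') * r j) * r j := by
      rw [← Finset.sum_neg_distrib]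
      refine Finset.sum_congr rfl fun j _ => ?_
      have : a' * -(r j) = (-a') * r j := by ring
      rw [this]; ring
    rw [hg]
    simp only
    rw [heq] at ha'
    linarith
  have hab : -a' ≤ b := by
    by_contra h
    push_neg at h
    have := hmono h
    linarith
  have h0mem : (0 : ℝ) ∈ Set.Icc (g (-a')) (g b) := ⟨le_of_lt haneg, le_of_lt hbpos⟩
  obtain ⟨ε, _, hε⟩ := intermediate_value_Icc hab hcont.continuousOn h0mem
  refine ⟨ε, (hiff ε).2 hε, fun y hy => ?_⟩
  exact hmono.injective (by rw [(hiff y).1 hy, hε])
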